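/- Let a : ℝ^{n-k+1} → M_k(ℝ^n) be a polynomial matrix map with rank a(x) ≥ k−1 for all x, and suppose m(x) ≠ 0 whenever x lies in the common zero set of the k×k minors, where m(x) is the determinant of the (k−1)×(k−1) submatrix of a(x) formed by rows 1,...,k−1 and columns 2,...,k. Then every zero (β,x) of ã(β,x) = Σᵢβᵢaᵢ(x) on S^{k-1} × ℝ^{n-k+1} satisfies β₁ ≠ 0. -/

import Mathlib

open Metric

/-- For a polynomial matrix map `a : ℝ^{n-k+1} → M_k(ℝ^n)` with
`rank a(x) ≥ k-1` everywhere, such that the minor `m(x)` (rows `1,…,k-1`, columns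
`2,…,k`, here 0-indexed rows `0,…,k-2`, columns `1,…,k-1`) is nonzero on the common zero
set of the `k×k` minors, every zero `(β,x)` of `ã` with `β ∈ S^{k-1}` has `β₁ ≠ 0`. -/
theorem stmt10 (n k : ℕ) (hk : 2 ≤ k) (hkn : k < n)
    (a : EuclideanSpace ℝ (Fin (n - k + 1)) → Matrix (Fin n) (Fin k) ℝ)
    (hpoly : ∀ (j : Fin n) (i : Fin k), ∃ p : MvPolynomial (Fin (n - k + 1)) ℝ,
      ∀ x, a x j i = MvPolynomial.eval (fun t => x t) p)
    (hrank : ∀ x, k - 1 ≤ (a x).rank)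
    (m : EuclideanSpace ℝ (Fin (n - k + 1)) → ℝ)
    (hm : ∀ x, m x = ((a x).submatrix
      (fun t : Fin (k - 1) => (⟨t, by omega⟩ : Fin n))
      (fun t : Fin (k - 1) => (⟨1 + t, by omega⟩ : Fin k))).det)
    (hmV : ∀ x, (∀ r : Fin k → Fin n, Function.Injective r →
      ((a x).submatrix r id).det = 0) → m x ≠ 0)
    (atilde : EuclideanSpace ℝ (Fin k) → EuclideanSpace ℝ (Fin (n - k + 1)) →
      EuclideanSpace ℝ (Fin n))
    (hatilde : ∀ β x j, atilde β x j = ∑ i : Fin k, β i * a x j i)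
    (β : EuclideanSpace ℝ (Fin k)) (hβ : β ∈ sphere (0 : EuclideanSpace ℝ (Fin k)) 1)
    (x : EuclideanSpace ℝ (Fin (n - k + 1))) (hzero : atilde β x = 0) :
    β ⟨0, by omega⟩ ≠ 0 := by
  have hβ1 : ‖β‖ = 1 := by simpa using hβ
  have hβne : β ≠ 0 := by
    intro h; rw [h] at hβ1; simp at hβ1
  have hrow : ∀ j : Fin n, ∑ i : Fin k, β i * a x j i = 0 := by
    intro j
    have := congrArg (fun v => v j) hzero
    rw [hatilde] at this
    simpa using this
  have hdet : ∀ r : Fin k → Fin n, Function.Injective r →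
      ((a x).submatrix r id).det = 0 := by
    intro r hr
    by_contra hd
    apply hβne
    apply WithLp.ofLp_injective 2
    rw [WithLp.ofLp_zero]
    apply Matrix.eq_zero_of_mulVec_eq_zero hd
    funext j
    have := hrow (r j)
    simp only [Matrix.mulVec, Matrix.submatrix_apply, dotProduct, id, Pi.zero_apply]
    rw [← this]
    exact Finset.sum_congr rfl fun i _ => mul_comm _ _
  have hmne : m x ≠ 0 := hmV x hdet
  rw [hm x] at hmne
  intro h0
  obtain ⟨k', rfl⟩ : ∃ k', k = k' + 1 := ⟨k - 1, by omega⟩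
  set M : Matrix (Fin (k' + 1 - 1)) (Fin (k' + 1 - 1)) ℝ := (a x).submatrix
      (fun t : Fin (k' + 1 - 1) => (⟨t, by omega⟩ : Fin n))
      (fun t : Fin (k' + 1 - 1) => (⟨1 + t, by omega⟩ : Fin (k' + 1))) with hM
  have hv : (fun t : Fin (k' + 1 - 1) => β (⟨1 + t, by omega⟩ : Fin (k' + 1))) = 0 := by
    apply Matrix.eq_zero_of_mulVec_eq_zero hmne
    funext j
    have hj : (j : ℕ) < n := by omega
    have := hrow ⟨j, hj⟩
    rw [Fin.sum_univ_succ] at this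
    have h00 : β (0 : Fin (k' + 1)) = 0 := h0
    rw [h00, zero_mul, zero_add] at this
    simp only [Matrix.mulVec, dotProduct, hM, Matrix.submatrix_apply, Pi.zero_apply]
    rw [← this]
    apply Finset.sum_congr rfl
    intro i _
    have hsucc : (Fin.succ i : Fin (k' + 1)) = (⟨1 + i, by omega⟩ : Fin (k' + 1)) := by
      apply Fin.ext; simp [Nat.add_comm]
    rw [hsucc, mul_comm]
  apply hβne
  ext i
  refine Fin.cases ?_ ?_ i
  · exact h0
  · intro j
    show β (Fin.succ j) = (0 : EuclideanSpace ℝ (Fin (k' + 1))) (Fin.succ j)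
    have h1 : Fin.succ j = (⟨1 + (j : ℕ), by omega⟩ : Fin (k' + 1)) :=
      Fin.ext (by simp [Nat.add_comm])
    rw [h1]
    simpa using congrFun hv j
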